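/- Let A be a finite alphabet, let X ⊆ A* be a recognizable set, and let 𝒜 be a trim deterministic finite automaton recognizing X. Then the deterministic reversal of 𝒜 (the determinization of the reversal of 𝒜) is isomorphic to the minimal automaton of the reversal X̃ of X. -/

import Mathlib

namespace Birec

variable {A : Type*}

/-- The left quotient `u⁻¹S = {v | u v ∈ S}`. -/
def leftQuot (S : Set (List A)) (u : List A) : Set (List A) := {v | u ++ v ∈ S}

/-- The reversal `S̃` of a language. -/
def langRev (S : Set (List A)) : Set (List A) := {w | w.reverse ∈ S}

lemma leftQuot_leftQuot (L : Set (List A)) (u v : List A) :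
    leftQuot (leftQuot L u) v = leftQuot L (u ++ v) := by
  ext w; simp [leftQuot, List.append_assoc]

/-- A deterministic automaton with partial transition function. -/
structure PDFA (A : Type*) (Q : Type*) where
  step : Q → A → Option Q
  init : Q
  accept : Set Q

namespace PDFA

variable {Q : Type*}

/-- The (partial) action of words on states. -/
def evalFrom (M : PDFA A Q) : Q → List A → Option Q
  | q, [] => some q
  | q, a :: w => match M.step q a with
    | none => none
    | some p => evalFrom M p w

variable (M : PDFA A Q)

/-- The language recognized by the automaton. -/
def lang : Set (List A) := {w | ∃ q : Q, M.evalFrom M.init w = some q ∧ q ∈ M.accept}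

/-- The automaton is trim: every state is accessible and co-accessible. -/
def Trim : Prop :=
  ∀ q : Q, (∃ u : List A, M.evalFrom M.init u = some q) ∧
    ∃ (v : List A) (t : Q), M.evalFrom q v = some t ∧ t ∈ M.accept

/-- The set `w · T` of states from which `w` leads into the terminal set. -/
def backSet (w : List A) : Set Q := {q | ∃ t : Q, M.evalFrom q w = some t ∧ t ∈ M.accept}

lemma backSet_cons (a : A) (w : List A) :
    M.backSet (a :: w) = {q | ∃ p ∈ M.backSet w, M.step q a = some p} := by
  ext q
  simp only [backSet, Set.mem_setOf_eq, evalFrom]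
  cases h : M.step q a <;> simp [h]

/-- The states of the deterministic reversal `Ã^δ`: the nonempty sets `w · T`. -/
def RevState := {U : Set Q // U.Nonempty ∧ ∃ w : List A, U = M.backSet w}

open Classical in
/-- The (partial) transition function of the deterministic reversal `Ã^δ`. -/
noncomputable def revStep (s : M.RevState) (a : A) : Option M.RevState :=
  if h : {q : Q | ∃ p ∈ s.1, M.step q a = some p}.Nonempty then
    some ⟨{q : Q | ∃ p ∈ s.1, M.step q a = some p}, h, by
      obtain ⟨w, hw⟩ := s.2.2
      exact ⟨a :: w, by rw [hw, backSet_cons]⟩⟩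
  else none

end PDFA

/-- The states of the minimal automaton of a language `L`:
the nonempty left quotients of `L`. -/
def MinState (L : Set (List A)) := {q : Set (List A) // q.Nonempty ∧ ∃ u : List A, q = leftQuot L u}

open Classical in
/-- The (partial) transition function of the minimal automaton of `L`. -/
noncomputable def minStep {L : Set (List A)} (s : MinState L) (a : A) : Option (MinState L) :=
  if h : (leftQuot s.1 [a]).Nonempty then
    some ⟨leftQuot s.1 [a], h, by
      obtain ⟨u, hu⟩ := s.2.2
      exact ⟨u ++ [a], by rw [hu, leftQuot_leftQuot]⟩⟩
  else none

end Birec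

namespace Birec
namespace PDFA

variable {A Q : Type*} (M : PDFA A Q)

lemma evalFrom_append (q : Q) (u v : List A) :
    M.evalFrom q (u ++ v) = (M.evalFrom q u).bind (fun p => M.evalFrom p v) := by
  induction u generalizing q with
  | nil => simp [evalFrom]
  | cons a u ih =>
    simp only [List.cons_append, evalFrom]
    cases M.step q a <;> simp [ih]

lemma evalFrom_singleton (q : Q) (a : A) : M.evalFrom q [a] = M.step q a := by
  simp only [evalFrom]
  cases M.step q a <;> rfl

/-- The forward image: words whose reverse leads from the initial state into `U`. -/
def fwdSet (U : Set Q) : Set (List A) :=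
  {v | ∃ q, M.evalFrom M.init v.reverse = some q ∧ q ∈ U}

lemma fwdSet_backSet (w : List A) :
    M.fwdSet (M.backSet w) = leftQuot (langRev M.lang) w.reverse := by
  ext v
  simp only [fwdSet, backSet, leftQuot, langRev, lang, Set.mem_setOf_eq,
    List.reverse_append, List.reverse_reverse, evalFrom_append]
  constructor
  · rintro ⟨q, hq, t, ht, hta⟩
    exact ⟨t, by rw [hq]; exact ht, hta⟩
  · rintro ⟨t, ht, hta⟩
    cases h : M.evalFrom M.init v.reverse with
    | none => rw [h] at ht; simp at ht
    | some q => rw [h] at ht; exact ⟨q, rfl, t, ht, hta⟩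

lemma mem_fwdSet_iff {U : Set Q} {q : Q} {u : List A}
    (hu : M.evalFrom M.init u = some q) : q ∈ U ↔ u.reverse ∈ M.fwdSet U := by
  simp [fwdSet, hu]

lemma fwdSet_nonempty (hM : M.Trim) {U : Set Q} (hU : U.Nonempty) :
    (M.fwdSet U).Nonempty := by
  obtain ⟨q, hq⟩ := hU
  obtain ⟨⟨u, hu⟩, -⟩ := hM q
  exact ⟨u.reverse, (M.mem_fwdSet_iff hu).1 hq⟩

lemma fwdSet_injective (hM : M.Trim) {U V : Set Q} (h : M.fwdSet U = M.fwdSet V) :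
    U = V := by
  ext q
  obtain ⟨⟨u, hu⟩, -⟩ := hM q
  rw [M.mem_fwdSet_iff hu, M.mem_fwdSet_iff hu, h]

lemma fwdSet_step (U : Set Q) (a : A) :
    M.fwdSet {q | ∃ p ∈ U, M.step q a = some p} = leftQuot (M.fwdSet U) [a] := by
  ext v
  simp only [fwdSet, leftQuot, Set.mem_setOf_eq, List.singleton_append,
    List.reverse_cons, evalFrom_append]
  constructor
  · rintro ⟨q, hq, p, hp, hstep⟩
    refine ⟨p, ?_, hp⟩
    rw [hq, Option.bind_some, evalFrom_singleton, hstep]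
  · rintro ⟨p, hp, hpU⟩
    cases h : M.evalFrom M.init v.reverse with
    | none => rw [h] at hp; simp at hp
    | some q =>
      rw [h, Option.bind_some, evalFrom_singleton] at hp
      exact ⟨q, rfl, p, hpU, hp⟩

end PDFA
end Birec

open Birec

/-- **Proposition.** If `𝒜` is a trim deterministic finite automaton recognizing `X`, then
the deterministic reversal `𝒜̃^δ` of `𝒜` is isomorphic to the minimal automaton of the
reversal `X̃` of `X`:  there is a bijection between the states which sends the initial
state `T` of `𝒜̃^δ` to the initial state `X̃` of the minimal automaton, commutes with the
(partial) transition functions, and preserves terminal states. -/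
theorem deterministic_reversal_is_minimal {A Q : Type*} [Fintype A] [Fintype Q]
    (M : PDFA A Q) (hM : M.Trim) :
    ∃ e : M.RevState ≃ MinState (langRev M.lang),
      (∀ s : M.RevState, s.1 = M.accept → (e s).1 = langRev M.lang) ∧
      (∀ (s : M.RevState) (a : A), Option.map e (M.revStep s a) = minStep (e s) a) ∧
      (∀ s : M.RevState, M.init ∈ s.1 ↔ [] ∈ (e s).1) := by

  classical
  have key : ∀ s : M.RevState, (M.fwdSet s.1).Nonempty ∧
      ∃ u : List A, M.fwdSet s.1 = leftQuot (langRev M.lang) u := by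
    rintro ⟨U, hne, w, rfl⟩
    exact ⟨M.fwdSet_nonempty hM hne, w.reverse, M.fwdSet_backSet w⟩
  set f : M.RevState → MinState (langRev M.lang) :=
    fun s => ⟨M.fwdSet s.1, key s⟩ with hf
  have hinj : Function.Injective f := by
    intro s t hst
    exact Subtype.ext (M.fwdSet_injective hM (congrArg Subtype.val hst))
  have hsurj : Function.Surjective f := by
    rintro ⟨V, hVne, u, rfl⟩
    have hback : (M.backSet u.reverse).Nonempty := by
      obtain ⟨v, hv⟩ := hVne
      have hv' : (u ++ v).reverse ∈ M.lang := hv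
      rw [List.reverse_append] at hv'
      obtain ⟨t, ht, hta⟩ := hv'
      rw [M.evalFrom_append] at ht
      cases h : M.evalFrom M.init v.reverse with
      | none => rw [h] at ht; simp at ht
      | some q =>
        rw [h, Option.bind_some] at ht
        exact ⟨q, t, ht, hta⟩
    refine ⟨⟨M.backSet u.reverse, hback, u.reverse, rfl⟩, ?_⟩
    apply Subtype.ext
    simpa using M.fwdSet_backSet u.reverse
  refine ⟨Equiv.ofBijective f ⟨hinj, hsurj⟩, ?_, ?_, ?_⟩
  · rintro ⟨U, hU⟩ h
    show (f ⟨U, hU⟩).1 = langRev M.lang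
    simp only [Equiv.ofBijective_apply, hf]
    dsimp only at h ⊢
    subst h
    ext v
    simp [PDFA.fwdSet, langRev, PDFA.lang]
  · rintro ⟨U, hU⟩ a
    show Option.map f (M.revStep ⟨U, hU⟩ a) = minStep (f ⟨U, hU⟩) a
    simp only [Equiv.ofBijective_apply, hf, PDFA.revStep, minStep]
    have hEq : leftQuot (M.fwdSet U) [a] =
        M.fwdSet {q | ∃ p ∈ U, M.step q a = some p} := (M.fwdSet_step U a).symm
    by_cases h : {q : Q | ∃ p ∈ U, M.step q a = some p}.Nonempty
    · have h2 : (leftQuot (M.fwdSet U) [a]).Nonempty := by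
        rw [hEq]; exact M.fwdSet_nonempty hM h
      rw [dif_pos h, dif_pos h2]
      show some _ = some _
      congr 1
      exact Subtype.ext hEq.symm
    · have h2 : ¬ (leftQuot (M.fwdSet U) [a]).Nonempty := by
        rw [hEq]
        rintro ⟨v, q, -, hq⟩
        exact h ⟨q, hq⟩
      rw [dif_neg h, dif_neg h2]; rfl
  · rintro ⟨U, hU⟩
    show M.init ∈ U ↔ [] ∈ (f ⟨U, hU⟩).1
    simp only [Equiv.ofBijective_apply, hf, PDFA.fwdSet, Set.mem_setOf_eq,
      List.reverse_nil, PDFA.evalFrom, Option.some.injEq]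
    constructor
    · exact fun h => ⟨M.init, rfl, h⟩
    · rintro ⟨q, rfl, hq⟩; exact hq
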